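/- In a footed MCFTG every generated pattern is footed; consequently the combinatorial core holds: if h is a simple tree homomorphism over N ∪ Σ mapping each nonterminal to a footed pattern of the same rank and each terminal σ to σ(x_1,…,x_{rk(σ)}), then the image ĥ(t) of every footed pattern t is again a footed pattern (of the same rank). -/

import Mathlib

inductive PTree (S : Type) : Type where
  | var  : ℕ → PTree S
  | node : S → List (PTree S) → PTree S

namespace PTree

variable {S D O : Type}

/-- The number of occurrences of the variable `x_i` in a tree. -/
def countVar (i : ℕ) : PTree S → ℕ
  | var j => if j = i then 1 else 0
  | node _ ts => (ts.attach.map (fun x => countVar i x.1)).sum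
  decreasing_by simp only [PTree.node.sizeOf_spec]; have := List.sizeOf_lt_of_mem x.2; omega

/-- The number of occurrences of the symbol `s` in a tree. -/
def countSym [DecidableEq S] (s : S) : PTree S → ℕ
  | var _ => 0
  | node s' ts => (if s' = s then 1 else 0) + (ts.attach.map (fun x => countSym s x.1)).sum
  decreasing_by simp only [PTree.node.sizeOf_spec]; have := List.sizeOf_lt_of_mem x.2; omega

/-- First-order substitution: replace each variable `x_i` by `f i`. -/
def subst (f : ℕ → PTree S) : PTree S → PTree S
  | var i => f i
  | node s ts => node s (ts.attach.map (fun x => subst f x.1))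
  decreasing_by simp only [PTree.node.sizeOf_spec]; have := List.sizeOf_lt_of_mem x.2; omega

/-- The tree map `ĥ` induced by a tree homomorphism `h`. -/
def hmap (h : S → PTree D) : PTree S → PTree D
  | var i => var i
  | node s ts =>
      subst (fun i => (ts.attach.map (fun x => hmap h x.1)).getD (i - 1) (var i)) (h s)
  decreasing_by simp only [PTree.node.sizeOf_spec]; have := List.sizeOf_lt_of_mem x.2; omega

/-- Well-formedness of a tree over a ranked alphabet: the number of children of
a node equals the rank of its label. -/
inductive WF (rk : S → ℕ) : PTree S → Prop where
  | var (i : ℕ) : WF rk (var i)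
  | node (s : S) (ts : List (PTree S)) :
      ts.length = rk s → (∀ t ∈ ts, WF rk t) → WF rk (node s ts)

/-- `t` is a `k`-ary pattern: each of the variables `x_1, …, x_k` occurs exactly once
in `t`, and no other variable occurs in `t`. -/
def IsPattern (k : ℕ) (t : PTree S) : Prop :=
  ∀ i : ℕ, countVar i t = if 1 ≤ i ∧ i ≤ k then 1 else 0

/-- The left-to-right sequence of (indices of) variable occurrences in a tree. -/
def varYield : PTree S → List ℕ
  | var i => [i]
  | node _ ts => (ts.attach.map (fun x => varYield x.1)).flatten
  decreasing_by simp only [PTree.node.sizeOf_spec]; have := List.sizeOf_lt_of_mem x.2; omega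

/-- The subtree at a given position (children of a node are numbered `0, 1, …`). -/
def subt? : List ℕ → PTree S → Option (PTree S)
  | [], t => some t
  | _ :: _, var _ => none
  | i :: p, node _ ts =>
      match ts[i]? with
      | some t => subt? p t
      | none => none

/-- Plug the tree `u` into the hole `□` (encoded as the variable `x_0`) of a context `c`. -/
def plug (c u : PTree S) : PTree S :=
  subst (fun i => if i = 0 then u else var i) c

/-- `init(s) = s(x_1, …, x_{rk s})`. -/
def initT (rk : S → ℕ) (s : S) : PTree S :=
  node s ((List.range (rk s)).map (fun i => var (i + 1)))

/-- The tree homomorphism corresponding to the second-order substitution `[σs ← us]`: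
it maps the `i`-th symbol of `σs` to the `i`-th pattern of `us` and any other symbol
`τ` to `init(τ)`. -/
def soHom [DecidableEq S] (rk : S → ℕ) (σs : List S) (us : List (PTree S)) : S → PTree S :=
  fun s => us.getD (σs.idxOf s) (initT rk s)

/-- Second-order substitution `t[σs ← us]`. -/
def soSubst [DecidableEq S] (rk : S → ℕ) (σs : List S) (us : List (PTree S)) :
    PTree S → PTree S :=
  hmap (soHom rk σs us)

/-- The symbol `s` occurs in the tree `t`. -/
def Occurs [DecidableEq S] (s : S) (t : PTree S) : Prop :=
  0 < countSym s t

/-- A tree of rank `k` is footed if `k = 0`, or `k ≥ 1` and it has a foot node: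
a position labeled by a symbol of rank `k` whose `i`-th child is the variable `x_i`. -/
def Footed (rk : S → ℕ) (k : ℕ) (t : PTree S) : Prop :=
  k = 0 ∨ ∃ (p : List ℕ) (s : S) (cs : List (PTree S)),
    subt? p t = some (node s cs) ∧ rk s = k ∧ ∀ i < k, cs[i]? = some (var (i + 1))

theorem countVar_var (i j : ℕ) : countVar i (var j : PTree S) = if j = i then 1 else 0 := by
  simp [countVar]

theorem countVar_node (i : ℕ) (s : S) (ts : List (PTree S)) :
    countVar i (node s ts) = (ts.map (countVar i)).sum := by
  rw [countVar]; rw [List.attach_map_val]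

theorem subst_var (f : ℕ → PTree S) (i : ℕ) : subst f (var i) = f i := by simp [subst]

theorem subst_node (f : ℕ → PTree S) (s : S) (ts : List (PTree S)) :
    subst f (node s ts) = node s (ts.map (subst f)) := by
  rw [subst]; rw [List.attach_map_val]

theorem hmap_node (h : S → PTree D) (s : S) (ts : List (PTree S)) :
    hmap h (node s ts) =
      subst (fun i => (ts.map (hmap h)).getD (i - 1) (var i)) (h s) := by
  rw [hmap]; rw [List.attach_map_val]

theorem varYield_var (i : ℕ) : varYield (var i : PTree S) = [i] := by simp [varYield]

theorem varYield_node (s : S) (ts : List (PTree S)) :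
    varYield (node s ts) = (ts.map varYield).flatten := by
  rw [varYield]; rw [List.attach_map_val]

theorem flatMap_flatten' (L : List (List ℕ)) (g : ℕ → List ℕ) :
    (L.flatten).flatMap g = (L.map (fun l => l.flatMap g)).flatten := by
  induction L with
  | nil => simp
  | cons a L ih => simp [ih]

theorem countVar_eq_count (i : ℕ) (t : PTree S) : countVar i t = (varYield t).count i := by
  match t with
  | var j =>
      rw [countVar_var, varYield_var]
      simp [List.count_cons]
  | node s ts =>
      rw [countVar_node, varYield_node, ← List.flatMap_def, List.count_flatMap]
      congr 1
      exact List.map_congr_left fun u hu => countVar_eq_count i u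
  decreasing_by simp only [PTree.node.sizeOf_spec]; have := List.sizeOf_lt_of_mem hu; omega

theorem varYield_subst (f : ℕ → PTree S) (t : PTree S) :
    varYield (subst f t) = (varYield t).flatMap (fun j => varYield (f j)) := by
  match t with
  | var i => simp [subst_var, varYield_var]
  | node s ts =>
      rw [subst_node, varYield_node, varYield_node, List.map_map, flatMap_flatten']
      congr 1
      rw [List.map_map]
      exact List.map_congr_left fun u hu => varYield_subst f u
  decreasing_by simp only [PTree.node.sizeOf_spec]; have := List.sizeOf_lt_of_mem hu; omega

theorem countVar_subst (f : ℕ → PTree S) (t : PTree S) (i : ℕ) :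
    countVar i (subst f t) = ((varYield t).map (fun j => countVar i (f j))).sum := by
  rw [countVar_eq_count, varYield_subst, List.count_flatMap]
  congr 1
  exact List.map_congr_left fun j _ => (countVar_eq_count i (f j)).symm

theorem WF.len {rk : S → ℕ} {s : S} {ts : List (PTree S)} (h : WF rk (PTree.node s ts)) :
    ts.length = rk s := by cases h; assumption

theorem WF.mem' {rk : S → ℕ} {s : S} {ts : List (PTree S)} (h : WF rk (PTree.node s ts)) :
    ∀ t ∈ ts, WF rk t := by cases h; assumption

theorem countVar_le_of_mem {u : PTree S} {ts : List (PTree S)} (h : u ∈ ts) (i : ℕ) (s : S) :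
    countVar i u ≤ countVar i (node s ts) := by
  rw [countVar_node]
  exact List.single_le_sum (fun x _ => Nat.zero_le x) _ (List.mem_map_of_mem h)

theorem wf_subst {rk : S → ℕ} {f : ℕ → PTree S} {t : PTree S}
    (ht : WF rk t) (hf : ∀ i, WF rk (f i)) : WF rk (subst f t) := by
  match t with
  | var i => rw [subst_var]; exact hf i
  | node s ts =>
      rw [subst_node]
      refine WF.node _ _ (by simpa using ht.len) ?_
      intro u hu
      rcases List.mem_map.1 hu with ⟨v, hv, rfl⟩
      exact wf_subst (ht.mem' v hv) hf
  decreasing_by simp only [PTree.node.sizeOf_spec]; have := List.sizeOf_lt_of_mem hv; omega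

theorem wf_hmap {rk : S → ℕ} {h : S → PTree S} (hwfh : ∀ s, WF rk (h s))
    {t : PTree S} (ht : WF rk t) : WF rk (hmap h t) := by
  match t with
  | var i => rw [hmap]; exact WF.var i
  | node s ts =>
      rw [hmap_node]
      refine wf_subst (hwfh s) ?_
      intro i
      rcases h' : (ts.map (hmap h))[i-1]? with _ | u
      · rw [List.getD_eq_getElem?_getD, h']; exact WF.var i
      · rw [List.getD_eq_getElem?_getD, h']
        have hi : i - 1 < ts.length := by
          by_contra hc
          rw [List.getElem?_eq_none (by simpa using Nat.le_of_not_lt hc)] at h'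
          simp at h'
        rw [List.getElem?_eq_getElem (by simpa using hi)] at h'
        obtain rfl : u = hmap h ts[i-1] := by
          have := h'.symm; rw [List.getElem_map] at this; exact (Option.some.inj this)
        exact wf_hmap hwfh (ht.mem' _ (List.getElem_mem hi))
  decreasing_by
    simp only [PTree.node.sizeOf_spec]
    have := List.sizeOf_lt_of_mem (List.getElem_mem hi); omega

theorem varYield_perm {k : ℕ} {t : PTree S} (ht : IsPattern k t) :
    (varYield t).Perm (List.range' 1 k) := by
  rw [List.perm_iff_count]
  intro a
  rw [← countVar_eq_count, ht a]
  by_cases ha : 1 ≤ a ∧ a ≤ k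
  · rw [if_pos ha]
    exact (List.count_eq_one_of_mem (List.nodup_range' (s := 1) (n := k)) (by rw [List.mem_range'_1]; omega)).symm
  · rw [if_neg ha]
    rw [eq_comm, List.count_eq_zero]
    rw [List.mem_range'_1]; omega

theorem sum_map_range' (g : ℕ → ℕ) (k : ℕ) :
    ((List.range' 1 k).map g).sum = ((List.range k).map (fun j => g (j + 1))).sum := by
  rw [List.range'_eq_map_range, List.map_map]
  congr 1
  exact List.map_congr_left fun j _ => by simp [Nat.add_comm]

theorem countVar_hmap {rk : S → ℕ} {h : S → PTree S}
    (hpath : ∀ s : S, IsPattern (rk s) (h s))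
    {t : PTree S} (ht : WF rk t) (i : ℕ) : countVar i (hmap h t) = countVar i t := by
  match t with
  | var j => rw [hmap]
  | node s ts =>
      rw [hmap_node, countVar_subst,
        ((varYield_perm (hpath s)).map _).sum_eq, sum_map_range', countVar_node]
      have hmapeq : (List.range (rk s)).map
          (fun j => countVar i ((ts.map (hmap h)).getD (j + 1 - 1) (var (j + 1))))
          = ts.map (countVar i) := by
        apply List.ext_getElem (by simpa using ht.len.symm)
        intro j hj hj'
        simp only [List.getElem_map, List.getElem_range]
        have hjlen : j < ts.length := by simpa using hj'
        rw [show j + 1 - 1 = j from rfl,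
          List.getD_eq_getElem (ts.map (hmap h)) (var (j + 1)) (n := j)
            (by simpa using hjlen), List.getElem_map]
        exact countVar_hmap hpath (ht.mem' _ (List.getElem_mem hjlen)) i
      rw [hmapeq]
  decreasing_by
    simp only [PTree.node.sizeOf_spec]
    have := List.sizeOf_lt_of_mem (List.getElem_mem hjlen); omega

theorem mem_of_getElem?' {α : Type*} {l : List α} {i : ℕ} {a : α} (h : l[i]? = some a) :
    a ∈ l := by
  obtain ⟨hi, rfl⟩ := List.getElem?_eq_some_iff.1 h
  exact List.getElem_mem hi

theorem subt?_append (p q : List ℕ) (t : PTree S) :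
    subt? (p ++ q) t = (subt? p t).bind (subt? q) := by
  induction p generalizing t with
  | nil => simp [subt?]
  | cons i p ih =>
      match t with
      | var j => simp [subt?]
      | node s ts =>
          rw [List.cons_append, subt?, subt?]
          rcases h : ts[i]? with _ | u
          · simp
          · exact ih u

theorem subt?_subst {f : ℕ → PTree S} {p : List ℕ} {t u : PTree S}
    (h : subt? p t = some u) : subt? p (subst f t) = some (subst f u) := by
  induction p generalizing t with
  | nil => rw [subt?] at h ⊢; rw [Option.some.inj h]
  | cons i p ih =>
      match t with
      | var j => rw [subt?] at h; simp at h
      | node s ts =>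
          rw [subt?] at h
          rcases h' : ts[i]? with _ | w
          · rw [h'] at h; simp at h
          · rw [h'] at h
            rw [subst_node, subt?, List.getElem?_map, h', Option.map_some]
            exact ih h

theorem exists_subt_var {j : ℕ} {t : PTree S} (h : 0 < countVar j t) :
    ∃ q, subt? q t = some (var j) := by
  match t with
  | var i =>
      refine ⟨[], ?_⟩
      rw [countVar_var] at h
      rcases eq_or_ne i j with rfl | hne
      · rfl
      · rw [if_neg hne] at h; omega
  | node s ts =>
      rw [countVar_node] at h
      have : ∃ u ∈ ts, 0 < countVar j u := by
        by_contra hc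
        push_neg at hc
        have : (ts.map (countVar j)).sum = 0 := by
          rw [List.sum_eq_zero_iff]
          intro x hx
          rcases List.mem_map.1 hx with ⟨u, hu, rfl⟩
          have := hc u hu; omega
        omega
      obtain ⟨u, hu, hcu⟩ := this
      obtain ⟨q, hq⟩ := exists_subt_var hcu
      obtain ⟨i, hi⟩ := List.getElem?_of_mem hu
      exact ⟨i :: q, by rw [subt?, hi]; exact hq⟩
  decreasing_by simp only [PTree.node.sizeOf_spec]; have := List.sizeOf_lt_of_mem hu; omega

theorem countVar_le_of_subt {p : List ℕ} {t u : PTree S} (h : subt? p t = some u) (i : ℕ) :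
    countVar i u ≤ countVar i t := by
  induction p generalizing t with
  | nil => rw [subt?] at h; rw [Option.some.inj h]
  | cons j p ih =>
      match t with
      | var a => rw [subt?] at h; simp at h
      | node s ts =>
          rw [subt?] at h
          rcases h' : ts[j]? with _ | w
          · rw [h'] at h; simp at h
          · rw [h'] at h
            exact le_trans (ih h) (countVar_le_of_mem (mem_of_getElem?' h') i s)

theorem subst_id {f : ℕ → PTree S} {t : PTree S}
    (h : ∀ j, 0 < countVar j t → f j = var j) : subst f t = t := by
  match t with
  | var i =>
      rw [subst_var]
      exact h i (by rw [countVar_var, if_pos rfl]; omega)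
  | node s ts =>
      rw [subst_node]
      congr 1
      have : ∀ u ∈ ts, subst f u = u := by
        intro u hu
        refine subst_id fun j hj => h j (lt_of_lt_of_le hj (countVar_le_of_mem hu j s))
      calc ts.map (subst f) = ts.map id := List.map_congr_left this
        _ = ts := List.map_id ts
  decreasing_by simp only [PTree.node.sizeOf_spec]; have := List.sizeOf_lt_of_mem hu; omega

theorem footed_hmap {rk : S → ℕ} {isN : S → Prop} {h : S → PTree S}
    (hwfh : ∀ s : S, WF rk (h s))
    (hpath : ∀ s : S, IsPattern (rk s) (h s))
    (hfooted : ∀ s : S, isN s → rk s = 0 ∨ ∃ (p : List ℕ) (s' : S) (cs : List (PTree S)),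
      subt? p (h s) = some (PTree.node s' cs) ∧ rk s' = rk s ∧
      ∀ i < rk s, cs[i]? = some (var (i + 1)))
    (hterm : ∀ s : S, ¬ isN s → h s = initT rk s)
    (p : List ℕ) (k : ℕ) (t : PTree S) (s0 : S) (cs : List (PTree S))
    (hwft : WF rk t) (hpatt : IsPattern k t)
    (hsub : subt? p t = some (PTree.node s0 cs)) (hrk : rk s0 = k)
    (hcs : ∀ i < k, cs[i]? = some (var (i + 1))) (hk : 1 ≤ k) :
    ∃ (p' : List ℕ) (s' : S) (cs' : List (PTree S)),
      subt? p' (hmap h t) = some (PTree.node s' cs') ∧ rk s' = k ∧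
      ∀ i < k, cs'[i]? = some (var (i + 1)) := by
  induction p generalizing t with
  | nil =>
      rw [subt?] at hsub
      obtain rfl : t = PTree.node s0 cs := Option.some.inj hsub
      have hlen : cs.length = k := by rw [hwft.len, hrk]
      have heq : hmap h (PTree.node s0 cs) = h s0 := by
        rw [hmap_node]
        refine subst_id fun j hj => ?_
        have hjk : 1 ≤ j ∧ j ≤ k := by
          by_contra hc
          rw [hpath s0 j, hrk, if_neg hc] at hj; omega
        have hj1 : j - 1 < cs.length := by omega
        have : cs[j-1] = var (j - 1 + 1) :=
          (List.getElem?_eq_some_iff.1 (hcs (j-1) (by omega))).2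
        rw [List.getD_eq_getElem (cs.map (hmap h)) (var j) (n := j - 1) (by simpa using hj1),
          List.getElem_map, this, hmap, show j - 1 + 1 = j by omega]
      rw [heq]
      by_cases hN : isN s0
      · rcases hfooted s0 hN with h0 | ⟨p', s', cs', h1, h2, h3⟩
        · omega
        · exact ⟨p', s', cs', h1, by omega, fun i hi => h3 i (by omega)⟩
      · refine ⟨[], s0, (List.range (rk s0)).map (fun i => var (i + 1)), ?_, hrk, ?_⟩
        · rw [hterm s0 hN]; rfl
        · intro i hi
          rw [List.getElem?_map, List.getElem?_range (by omega), Option.map_some]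
  | cons i p ih =>
      match t, hsub with
      | PTree.node s ts, hsub =>
          rw [subt?] at hsub
          rcases h' : ts[i]? with _ | u
          · rw [h'] at hsub; simp at hsub
          rw [h'] at hsub
          have humem : u ∈ ts := mem_of_getElem?' h'
          have hwfu : WF rk u := hwft.mem' u humem
          have hpattu : IsPattern k u := by
            intro j
            have hle : countVar j u ≤ countVar j (PTree.node s ts) :=
              countVar_le_of_mem humem j s
            rw [hpatt j] at hle
            by_cases hjk : 1 ≤ j ∧ j ≤ k
            · rw [if_pos hjk] at hle ⊢
              have h1 : (1 : ℕ) ≤ countVar j (PTree.node s0 cs) := by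
                have hmem : (var j : PTree S) ∈ cs := by
                  have := hcs (j - 1) (by omega)
                  rw [show j - 1 + 1 = j by omega] at this
                  exact mem_of_getElem?' this
                have := countVar_le_of_mem hmem j s0
                rwa [countVar_var, if_pos rfl] at this
              have h2 := countVar_le_of_subt hsub j
              omega
            · rw [if_neg hjk] at hle ⊢
              omega
          have := ih u hwfu hpattu hsub
          obtain ⟨q, s', cs', hq1, hq2, hq3⟩ := this
          -- position of var (i+1) in h s
          have hilen : i < ts.length := (List.getElem?_eq_some_iff.1 h').1
          have hcv : 0 < countVar (i + 1) (h s) := by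
            rw [hpath s (i + 1), if_pos ⟨by omega, by rw [← hwft.len]; omega⟩]; omega
          obtain ⟨q0, hq0⟩ := exists_subt_var hcv
          have hfI : (ts.map (hmap h)).getD (i + 1 - 1) (var (i + 1)) = hmap h u := by
            rw [show i + 1 - 1 = i from rfl,
              List.getD_eq_getElem (ts.map (hmap h)) (var (i + 1)) (n := i)
                (by simpa using hilen), List.getElem_map,
              (List.getElem?_eq_some_iff.1 h').2]
          refine ⟨q0 ++ q, s', cs', ?_, hq2, hq3⟩
          rw [hmap_node, subt?_append]
          have := subt?_subst (f := fun j => (ts.map (hmap h)).getD (j - 1) (var j)) hq0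
          rw [this, Option.bind_some, subst_var, hfI, hq1]

end PTree

open PTree in
/-- In a footed MCFTG every generated pattern is footed — the combinatorial core: if a
simple tree homomorphism `h` over `N ∪ Σ` maps every nonterminal to a footed pattern of
the same rank and every terminal `σ` to `σ(x_1, …, x_{rk σ})`, then the image `ĥ(t)` of
every footed pattern `t` is again a footed pattern of the same rank. -/
theorem stmt19 {S : Type} (rk : S → ℕ) (isN : S → Prop) (h : S → PTree S)
    (hwfh : ∀ s : S, WF rk (h s))
    (hpath : ∀ s : S, IsPattern (rk s) (h s))
    (hfooted : ∀ s : S, isN s → Footed rk (rk s) (h s))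
    (hterm : ∀ s : S, ¬ isN s → h s = initT rk s)
    (k : ℕ) (t : PTree S)
    (hwft : WF rk t) (hpatt : IsPattern k t) (hft : Footed rk k t) :
    WF rk (hmap h t) ∧ IsPattern k (hmap h t) ∧ Footed rk k (hmap h t) := by
  refine ⟨wf_hmap hwfh hwft, ?_, ?_⟩
  · intro i
    rw [countVar_hmap hpath hwft, hpatt i]
  · rcases Nat.eq_zero_or_pos k with rfl | hk
    · exact Or.inl rfl
    rcases hft with h0 | ⟨p, s0, cs, h1, h2, h3⟩
    · omega
    · exact Or.inr (footed_hmap hwfh hpath (fun s hs => hfooted s hs) hterm p k t s0 cs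
        hwft hpatt h1 h2 h3 hk)
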